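/- arXiv:0810.5578 — 5 statements merged into one kernel-verified Lean document; each statement's English description precedes it below -/
import Mathlib

section
/- A graph G is (2,1)-anonymous if and only if every vertex u of G either (a) is part of a triangle, (b) is adjacent to a vertex of degree at least 3, or (c) is the middle vertex of a path of 5 vertices. -/
/-- A graph is `(2,1)`-anonymous iff every vertex `u` is part of a triangle, is adjacent
to a vertex of degree at least 3, or is the middle vertex of a path on 5 vertices. -/
theorem two_one_anonymous_characterization {V : Type*} [Fintype V] (G : SimpleGraph V) :
    (∀ u : V, ∃ U : Finset V, u ∉ U ∧ 2 ≤ U.card ∧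
        ∀ x ∈ U, (G.neighborSet u ∩ G.neighborSet x).Nonempty) ↔
    (∀ u : V,
      (∃ v w : V, G.Adj u v ∧ G.Adj v w ∧ G.Adj u w) ∨
      (∃ v : V, G.Adj u v ∧ 3 ≤ (G.neighborSet v).ncard) ∨
      (∃ a b c d : V, [a, b, u, c, d].Nodup ∧
        G.Adj a b ∧ G.Adj b u ∧ G.Adj u c ∧ G.Adj c d)) := by
  classical
  constructor
  · intro h u
    obtain ⟨U, huU, hcard, hcommon⟩ := h u
    obtain ⟨x, hx, y, hy, hxy⟩ := Finset.one_lt_card.mp hcard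
    obtain ⟨b, hb⟩ := hcommon x hx
    obtain ⟨c, hc⟩ := hcommon y hy
    have hbu : G.Adj u b := hb.1
    have hbx : G.Adj x b := hb.2
    have hcu : G.Adj u c := hc.1
    have hcy : G.Adj y c := hc.2
    have hxu : x ≠ u := fun h' => huU (h' ▸ hx)
    have hyu : y ≠ u := fun h' => huU (h' ▸ hy)
    by_cases hbc : b = c
    · right; left
      refine ⟨b, hbu, ?_⟩
      have hsub : ({u, x, y} : Set V) ⊆ G.neighborSet b := by
        intro z hz
        rcases hz with rfl | rfl | rfl
        · exact hbu.symm
        · exact hbx.symm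
        · exact hbc ▸ hcy.symm
      calc (3 : ℕ) = ({u, x, y} : Set V).ncard := by
            rw [Set.ncard_insert_of_notMem (by simp [hxu.symm, hyu.symm]),
                Set.ncard_insert_of_notMem (by simp [hxy]), Set.ncard_singleton]
        _ ≤ (G.neighborSet b).ncard :=
            Set.ncard_le_ncard hsub (Set.toFinite _)
    · by_cases hadj : G.Adj b c
      · exact Or.inl ⟨b, c, hbu, hadj, hcu⟩
      · by_cases hxc : x = c
        · subst hxc
          exact Or.inl ⟨b, x, hbu, hbx.symm, hcu⟩
        · by_cases hyb : y = b
          · subst hyb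
            exact Or.inl ⟨c, y, hcu, hcy.symm, hbu⟩
          · right; right
            have h1 : x ≠ b := hbx.ne
            have h2 : b ≠ u := hbu.ne'
            have h3 : u ≠ c := hcu.ne
            have h4 : c ≠ y := hcy.ne'
            exact ⟨x, b, c, y, by
              simp [List.nodup_cons, h1, hxu, hxc, hxy, h2, hbc, Ne.symm hyb, h3,
                Ne.symm hyu, h4], hbx, hbu.symm, hcu, hcy.symm⟩
  · intro h u
    rcases h u with ⟨v, w, huv, hvw, huw⟩ | ⟨v, huv, hdeg⟩ |
      ⟨a, b, c, d, hnd, hab, hbu, huc, hcd⟩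
    · refine ⟨{v, w}, ?_, ?_, ?_⟩
      · simp [huv.ne, huw.ne]
      · rw [Finset.card_insert_of_notMem (by simp [hvw.ne]), Finset.card_singleton]
      · intro z hz
        rcases Finset.mem_insert.mp hz with rfl | hz
        · exact ⟨w, huw, hvw⟩
        · rw [Finset.mem_singleton] at hz; subst hz
          exact ⟨v, huv, hvw.symm⟩
    · have hcard : 3 ≤ (G.neighborFinset v).card := by
        rwa [SimpleGraph.neighborFinset, ← Set.ncard_eq_toFinset_card']
      have h2 : 2 ≤ ((G.neighborFinset v).erase u).card := by
        have := Finset.pred_card_le_card_erase (s := G.neighborFinset v) (a := u)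
        omega
      obtain ⟨x, hx, y, hy, hxy⟩ := Finset.one_lt_card.mp h2
      obtain ⟨hxu, hxv⟩ := Finset.mem_erase.mp hx
      obtain ⟨hyu, hyv⟩ := Finset.mem_erase.mp hy
      rw [SimpleGraph.mem_neighborFinset] at hxv hyv
      refine ⟨{x, y}, by simp [Ne.symm hxu, Ne.symm hyu], ?_, ?_⟩
      · rw [Finset.card_insert_of_notMem (by simp [hxy]), Finset.card_singleton]
      · intro z hz
        rcases Finset.mem_insert.mp hz with rfl | hz
        · exact ⟨v, huv, hxv.symm⟩
        · rw [Finset.mem_singleton] at hz; subst hz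
          exact ⟨v, huv, hyv.symm⟩
    · simp only [List.nodup_cons, List.mem_cons, List.not_mem_nil, or_false,
        List.nodup_nil, and_true, not_or] at hnd
      obtain ⟨⟨hab', hau, hac, had⟩, ⟨hbu', hbc, hbd⟩, ⟨huc', hud⟩, hcd'⟩ := hnd
      refine ⟨{a, d}, by simp [Ne.symm hau, hud], ?_, ?_⟩
      · rw [Finset.card_insert_of_notMem (by simp [had]), Finset.card_singleton]
      · intro z hz
        rcases Finset.mem_insert.mp hz with rfl | hz
        · exact ⟨b, hbu.symm, hab⟩
        · rw [Finset.mem_singleton] at hz; subst hz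
          exact ⟨c, huc, hcd.symm⟩
end

section
/- Adding a single edge uv to a graph G decreases the total residual anonymity r(G) (with respect to the weak (k,1)-anonymity requirement) by at most 4k. Specifically, if G' = G + uv, then r(G) − r(G') ≤ 4k. -/
open scoped Classical in
/-- The number of vertices other than `v` sharing at least one neighbor with `v`. -/
noncomputable def sharingCount {V : Type*} [Fintype V] (G : SimpleGraph V) (v : V) : ℕ :=
  (Finset.univ.filter
    (fun u => u ≠ v ∧ (G.neighborSet v ∩ G.neighborSet u).Nonempty)).card

/-- The total residual anonymity of `G` for the weak `(k,1)`-requirement: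
`r(G) = ∑_v max(k - k'(v), 0)`. -/
noncomputable def totalResidual {V : Type*} [Fintype V] (G : SimpleGraph V) (k : ℕ) : ℕ :=
  ∑ v : V, (k - sharingCount G v)

open scoped Classical

noncomputable def sharingSet {V : Type*} [Fintype V] (G : SimpleGraph V) (v : V) : Finset V :=
  Finset.univ.filter
    (fun u => u ≠ v ∧ (G.neighborSet v ∩ G.neighborSet u).Nonempty)

example {V : Type*} [Fintype V] (G : SimpleGraph V) (v : V) :
    sharingCount G v = (sharingSet G v).card := rfl

lemma mem_sharingSet {V : Type*} [Fintype V] (G : SimpleGraph V) (v x : V) :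
    x ∈ sharingSet G v ↔ x ≠ v ∧ ∃ y, G.Adj v y ∧ G.Adj x y := by
  simp [sharingSet, Set.Nonempty, SimpleGraph.mem_neighborSet]

lemma adj_sup {V : Type*} (G : SimpleGraph V) (u v a b : V) (huv : u ≠ v) :
    (G ⊔ SimpleGraph.fromEdgeSet {s(u, v)}).Adj a b ↔
      G.Adj a b ∨ (a = u ∧ b = v) ∨ (a = v ∧ b = u) := by
  simp [SimpleGraph.fromEdgeSet_adj, Sym2.eq_iff]
  constructor
  · rintro (h | ⟨(⟨rfl,rfl⟩|⟨rfl,rfl⟩), h2⟩) <;> tauto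
  · rintro (h | ⟨rfl,rfl⟩ | ⟨rfl,rfl⟩) <;> tauto

lemma sharingSet_mono {V : Type*} [Fintype V] (G H : SimpleGraph V) (h : G ≤ H) (v : V) :
    sharingSet G v ⊆ sharingSet H v := by
  intro x hx
  rw [mem_sharingSet] at hx ⊢
  obtain ⟨hxv, y, h1, h2⟩ := hx
  exact ⟨hxv, y, h h1, h h2⟩

lemma new_mem {V : Type*} [Fintype V] (G : SimpleGraph V) (u v w x : V) (huv : u ≠ v)
    (hwu : w ≠ u) (hwv : w ≠ v)
    (hx : x ∈ sharingSet (G ⊔ SimpleGraph.fromEdgeSet {s(u, v)}) w)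
    (hx' : x ∉ sharingSet G w) :
    (x = u ∧ G.Adj v w) ∨ (x = v ∧ G.Adj u w) := by
  rw [mem_sharingSet] at hx hx'
  obtain ⟨hxw, y, h1, h2⟩ := hx
  rw [adj_sup _ _ _ _ _ huv] at h1 h2
  rcases h1 with h1 | ⟨rfl, rfl⟩ | ⟨rfl, rfl⟩
  · rcases h2 with h2 | ⟨rfl, rfl⟩ | ⟨rfl, rfl⟩
    · exact absurd ⟨hxw, y, h1, h2⟩ hx'
    · exact Or.inl ⟨rfl, h1.symm⟩
    · exact Or.inr ⟨rfl, h1.symm⟩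
  · exact absurd rfl hwu
  · exact absurd rfl hwv

/-- The number of deficient neighbors of `u` is at most `k`. -/
lemma deficient_nbrs_le {V : Type*} [Fintype V] (G : SimpleGraph V) (k : ℕ) (u : V) :
    (Finset.univ.filter (fun w => G.Adj u w ∧ sharingCount G w < k)).card ≤ k := by
  set F := Finset.univ.filter (fun w => G.Adj u w ∧ sharingCount G w < k) with hF
  rcases F.eq_empty_or_nonempty with h | ⟨w, hw⟩
  · simp [h]
  · rw [hF, Finset.mem_filter] at hw
    obtain ⟨-, hadj, hdef⟩ := hw
    have hsub : G.neighborFinset u \ {w} ⊆ sharingSet G w := by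
      intro x hx
      rw [Finset.mem_sdiff, SimpleGraph.mem_neighborFinset, Finset.mem_singleton] at hx
      rw [mem_sharingSet]
      exact ⟨hx.2, u, hadj.symm, hx.1.symm⟩
    have hcard := Finset.card_le_card hsub
    have hw' : w ∈ G.neighborFinset u := by
      rw [SimpleGraph.mem_neighborFinset]; exact hadj
    have hsd : (G.neighborFinset u \ {w}).card = (G.neighborFinset u).card - 1 := by
      rw [Finset.card_sdiff_of_subset (by simpa using hw')]
      simp
    have hFsub : F ⊆ G.neighborFinset u := by
      intro x hx
      rw [hF, Finset.mem_filter] at hx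
      rw [SimpleGraph.mem_neighborFinset]
      exact hx.2.1
    have hcount : sharingCount G w = (sharingSet G w).card := rfl
    have h1 : (G.neighborFinset u).card ≤ k := by omega
    exact le_trans (Finset.card_le_card hFsub) h1

lemma drop_le {V : Type*} [Fintype V] (G : SimpleGraph V) (k : ℕ) (u v w : V) (huv : u ≠ v)
    (hwu : w ≠ u) (hwv : w ≠ v) :
    (k - sharingCount G w) -
        (k - sharingCount (G ⊔ SimpleGraph.fromEdgeSet {s(u, v)}) w) ≤
      (if G.Adj u w ∧ sharingCount G w < k then 1 else 0)
        + (if G.Adj v w ∧ sharingCount G w < k then 1 else 0) := by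
  set G' := G ⊔ SimpleGraph.fromEdgeSet {s(u, v)} with hG'
  by_cases hdef : sharingCount G w < k
  swap
  · have h0 : k - sharingCount G w = 0 := by omega
    simp [h0]
  · have hsub : sharingSet G w ⊆ sharingSet G' w := sharingSet_mono _ _ le_sup_left _
    have hcards : sharingCount G w = (sharingSet G w).card := rfl
    have hcards' : sharingCount G' w = (sharingSet G' w).card := rfl
    have hdiff : (sharingSet G' w \ sharingSet G w).card =
        sharingCount G' w - sharingCount G w := by
      rw [hcards, hcards', Finset.card_sdiff_of_subset hsub]
    have hsubset : sharingSet G' w \ sharingSet G w ⊆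
        (if G.Adj v w then ({u} : Finset V) else ∅)
          ∪ (if G.Adj u w then ({v} : Finset V) else ∅) := by
      intro x hx
      rw [Finset.mem_sdiff] at hx
      rcases new_mem G u v w x huv hwu hwv hx.1 hx.2 with ⟨rfl, h⟩ | ⟨rfl, h⟩
      · simp [h]
      · simp [h]
    have key : sharingCount G' w - sharingCount G w ≤
        ((if G.Adj v w then ({u} : Finset V) else ∅)).card
          + ((if G.Adj u w then ({v} : Finset V) else ∅)).card := by
      rw [← hdiff]
      exact le_trans (Finset.card_le_card hsubset) (Finset.card_union_le _ _)
    have hmono : sharingCount G w ≤ sharingCount G' w := by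
      rw [hcards, hcards']; exact Finset.card_le_card hsub
    by_cases hu : G.Adj u w <;> by_cases hv : G.Adj v w <;>
      simp [hu, hv, hdef] at key ⊢ <;> omega

/-- Adding a single edge `uv` decreases the total residual anonymity (for the weak
`(k,1)`-requirement) by at most `4k`. -/
theorem add_edge_residual_drop_le {V : Type*} [Fintype V] (G : SimpleGraph V) (k : ℕ)
    (hk : 1 ≤ k) (u v : V) (huv : u ≠ v) :
    totalResidual G k - totalResidual (G ⊔ SimpleGraph.fromEdgeSet {s(u, v)}) k
      ≤ 4 * k := by
  set G' := G ⊔ SimpleGraph.fromEdgeSet {s(u, v)} with hG'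
  have hmono : ∀ w, sharingCount G w ≤ sharingCount G' w := fun w =>
    Finset.card_le_card (sharingSet_mono _ _ le_sup_left w)
  set f : V → ℕ := fun w => (k - sharingCount G w) - (k - sharingCount G' w) with hf
  have step1 : totalResidual G k ≤ totalResidual G' k + ∑ w, f w := by
    rw [totalResidual, totalResidual, ← Finset.sum_add_distrib]
    apply Finset.sum_le_sum
    intro w _
    have := hmono w
    simp only [hf]
    omega
  have fk : ∀ w, f w ≤ k := fun w => le_trans (Nat.sub_le _ _) (Nat.sub_le _ _)
  have step2 : ∑ w, f w ≤ 4 * k := by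
    have hsplit := Finset.sum_filter_add_sum_filter_not Finset.univ
      (fun w => w = u ∨ w = v) f
    have h1 : ∑ w ∈ Finset.univ.filter (fun w => w = u ∨ w = v), f w ≤ 2 * k := by
      have : Finset.univ.filter (fun w => w = u ∨ w = v) = {u, v} := by
        ext x; simp
      rw [this, Finset.sum_pair huv]
      have := fk u; have := fk v; omega
    have h2 : ∑ w ∈ Finset.univ.filter (fun w => ¬(w = u ∨ w = v)), f w ≤ 2 * k := by
      have hb : ∀ w ∈ Finset.univ.filter (fun w => ¬(w = u ∨ w = v)),
          f w ≤ (if G.Adj u w ∧ sharingCount G w < k then 1 else 0)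
            + (if G.Adj v w ∧ sharingCount G w < k then 1 else 0) := by
        intro w hw
        rw [Finset.mem_filter] at hw
        push_neg at hw
        exact drop_le G k u v w huv hw.2.1 hw.2.2
      calc ∑ w ∈ Finset.univ.filter (fun w => ¬(w = u ∨ w = v)), f w
          ≤ ∑ w ∈ Finset.univ.filter (fun w => ¬(w = u ∨ w = v)),
              ((if G.Adj u w ∧ sharingCount G w < k then 1 else 0)
                + (if G.Adj v w ∧ sharingCount G w < k then 1 else 0)) :=
            Finset.sum_le_sum hb
        _ ≤ ∑ w : V, ((if G.Adj u w ∧ sharingCount G w < k then 1 else 0)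
                + (if G.Adj v w ∧ sharingCount G w < k then 1 else 0)) :=
            Finset.sum_le_sum_of_subset (Finset.filter_subset _ _)
        _ = (Finset.univ.filter (fun w => G.Adj u w ∧ sharingCount G w < k)).card
              + (Finset.univ.filter (fun w => G.Adj v w ∧ sharingCount G w < k)).card := by
            rw [Finset.sum_add_distrib, Finset.card_filter, Finset.card_filter]
        _ ≤ k + k := add_le_add (deficient_nbrs_le G k u) (deficient_nbrs_le G k v)
        _ = 2 * k := by ring
    omega
  omega
end

section
/- Adding a single edge uv to a graph G decreases the total strong residual anonymity by at most 2k: the edge uv can decrease the strong residual anonymity only of original neighbors of u and of v in G, each by at most 1, and there are at most 2k deficient such neighbors. -/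
open scoped Classical in
/-- The number of vertices `u ≠ v` with `|N_G(v) ∩ N_H(u)| ≥ 1`, where `G` is the
original graph and `H` a supergraph. -/
noncomputable def strongSharingCount {V : Type*} [Fintype V] (G H : SimpleGraph V)
    (v : V) : ℕ :=
  (Finset.univ.filter
    (fun u => u ≠ v ∧ (G.neighborSet v ∩ H.neighborSet u).Nonempty)).card

/-- Total strong residual anonymity of supergraph `H` w.r.t. original graph `G`. -/
noncomputable def strongTotalResidual {V : Type*} [Fintype V] (G H : SimpleGraph V)
    (k : ℕ) : ℕ :=
  ∑ v : V, (k - strongSharingCount G H v)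

open scoped Classical in
/-- Monotonicity of the sharing count in the supergraph. -/
lemma strongSharingCount_mono {V : Type*} [Fintype V] (G : SimpleGraph V)
    {H H' : SimpleGraph V} (h : H ≤ H') (w : V) :
    strongSharingCount G H w ≤ strongSharingCount G H' w := by
  classical
  unfold strongSharingCount
  apply Finset.card_le_card
  intro x hx
  simp only [Finset.mem_filter, Finset.mem_univ, true_and] at hx ⊢
  obtain ⟨hne, y, hy1, hy2⟩ := hx
  exact ⟨hne, y, hy1, h hy2⟩

open scoped Classical in
/-- Adding edge `uv` increases the sharing count of `w` by at most one via `u`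
(when `w` is an original neighbor of `v`) and one via `v`. -/
lemma strongSharingCount_add_edge_le {V : Type*} [Fintype V] (G H : SimpleGraph V)
    (u v w : V) (huv : u ≠ v) :
    strongSharingCount G (H ⊔ SimpleGraph.fromEdgeSet {s(u, v)}) w ≤
      strongSharingCount G H w
        + (if G.Adj w v then 1 else 0) + (if G.Adj w u then 1 else 0) := by
  classical
  unfold strongSharingCount
  have hsub : (Finset.univ.filter
      (fun x => x ≠ w ∧ (G.neighborSet w ∩
        (H ⊔ SimpleGraph.fromEdgeSet {s(u, v)}).neighborSet x).Nonempty)) ⊆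
      (Finset.univ.filter
        (fun x => x ≠ w ∧ (G.neighborSet w ∩ H.neighborSet x).Nonempty))
      ∪ ((if G.Adj w v then {u} else ∅) ∪ (if G.Adj w u then {v} else ∅)) := by
    intro x hx
    simp only [Finset.mem_filter, Finset.mem_univ, true_and] at hx
    obtain ⟨hne, y, hy1, hy2⟩ := hx
    simp only [Set.mem_setOf_eq, SimpleGraph.mem_neighborSet] at hy1 hy2
    by_cases hH : H.Adj x y
    · apply Finset.mem_union_left
      simp only [Finset.mem_filter, Finset.mem_univ, true_and]
      exact ⟨hne, y, hy1, hH⟩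
    · apply Finset.mem_union_right
      rw [SimpleGraph.sup_adj, SimpleGraph.fromEdgeSet_adj] at hy2
      rcases hy2 with hy2 | ⟨hmem, _⟩
      · exact absurd hy2 hH
      · simp only [Set.mem_singleton_iff, Sym2.eq_iff] at hmem
        rcases hmem with ⟨hx1, hy1'⟩ | ⟨hx1, hy1'⟩
        · have hwv : G.Adj w v := hy1' ▸ hy1
          simp [hwv, hx1]
        · have hwu : G.Adj w u := hy1' ▸ hy1
          simp [hwu, hx1]
  have hcard : ((if G.Adj w v then ({u} : Finset V) else ∅) ∪
      (if G.Adj w u then ({v} : Finset V) else ∅)).card ≤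
      (if G.Adj w v then 1 else 0) + (if G.Adj w u then 1 else 0) := by
    refine le_trans (Finset.card_union_le _ _) ?_
    by_cases h1 : G.Adj w v <;> by_cases h2 : G.Adj w u <;> simp [h1, h2]
  have := Finset.card_le_card hsub
  have h2 := Finset.card_union_le (Finset.univ.filter
      (fun x => x ≠ w ∧ (G.neighborSet w ∩ H.neighborSet x).Nonempty))
      ((if G.Adj w v then ({u} : Finset V) else ∅) ∪
        (if G.Adj w u then ({v} : Finset V) else ∅))
  omega

open scoped Classical in
/-- At most `k` deficient vertices are original neighbors of a fixed vertex `x`. -/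
lemma card_deficient_neighbors_le {V : Type*} [Fintype V] (G H : SimpleGraph V)
    (hGH : G ≤ H) (k : ℕ) (x : V) :
    (Finset.univ.filter (fun w => G.Adj w x ∧ strongSharingCount G H w < k)).card
      ≤ k := by
  classical
  set A := Finset.univ.filter (fun w => G.Adj w x ∧ strongSharingCount G H w < k)
    with hA
  by_contra hcon
  push_neg at hcon
  have hne : A.Nonempty := Finset.card_pos.mp (by omega)
  obtain ⟨w, hw⟩ := hne
  simp only [hA, Finset.mem_filter, Finset.mem_univ, true_and] at hw
  obtain ⟨hwx, hwk⟩ := hw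
  have hsub : A.erase w ⊆ Finset.univ.filter
      (fun z => z ≠ w ∧ (G.neighborSet w ∩ H.neighborSet z).Nonempty) := by
    intro z hz
    rw [Finset.mem_erase] at hz
    obtain ⟨hzw, hzA⟩ := hz
    simp only [hA, Finset.mem_filter, Finset.mem_univ, true_and] at hzA
    simp only [Finset.mem_filter, Finset.mem_univ, true_and]
    refine ⟨hzw, x, hwx, ?_⟩
    exact hGH hzA.1
  have h1 : (A.erase w).card ≤ strongSharingCount G H w :=
    Finset.card_le_card hsub
  have h2 : (A.erase w).card = A.card - 1 := Finset.card_erase_of_mem (by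
    simp only [hA, Finset.mem_filter, Finset.mem_univ, true_and]; exact ⟨hwx, hwk⟩)
  omega

/-- Adding a single edge `uv` to a supergraph `H` of `G` decreases the total strong
residual anonymity (for the `(k,1)`-requirement) by at most `2k`. -/
theorem add_edge_strong_residual_drop_le {V : Type*} [Fintype V] (G H : SimpleGraph V)
    (hGH : G ≤ H) (k : ℕ) (hk : 1 ≤ k) (u v : V) (huv : u ≠ v) :
    strongTotalResidual G H k -
      strongTotalResidual G (H ⊔ SimpleGraph.fromEdgeSet {s(u, v)}) k ≤ 2 * k := by
  classical
  set H' := H ⊔ SimpleGraph.fromEdgeSet {s(u, v)} with hH'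
  set c := strongSharingCount G H with hc
  set c' := strongSharingCount G H' with hc'
  have hmono : ∀ w, c w ≤ c' w := fun w =>
    strongSharingCount_mono G le_sup_left w
  have hstep : ∀ w, c' w ≤ c w
      + (if G.Adj w v then 1 else 0) + (if G.Adj w u then 1 else 0) := fun w =>
    strongSharingCount_add_edge_le G H u v w huv
  have key : ∀ w, (k - c w) - (k - c' w)
      ≤ (if G.Adj w v ∧ c w < k then 1 else 0)
        + (if G.Adj w u ∧ c w < k then 1 else 0) := by
    intro w
    have h1 := hmono w
    have h2 := hstep w
    by_cases hv : G.Adj w v <;> by_cases hu : G.Adj w u <;>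
      by_cases hk' : c w < k <;> simp only [hv, hu, hk', true_and, false_and,
        and_true, and_false, if_true, if_false] at h2 ⊢ <;> omega
  have step1 : strongTotalResidual G H k - strongTotalResidual G H' k
      ≤ ∑ w : V, ((k - c w) - (k - c' w)) := by
    unfold strongTotalResidual
    simp only [← hc, ← hc', ← hH']
    rw [tsub_le_iff_right, ← Finset.sum_add_distrib]
    exact Finset.sum_le_sum fun w _ => by have := hmono w; omega
  have step2 : ∑ w : V, ((k - c w) - (k - c' w))
      ≤ ∑ w : V, ((if G.Adj w v ∧ c w < k then 1 else 0)
        + (if G.Adj w u ∧ c w < k then 1 else 0)) :=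
    Finset.sum_le_sum fun w _ => key w
  have step3 : ∑ w : V, ((if G.Adj w v ∧ c w < k then 1 else 0)
      + (if G.Adj w u ∧ c w < k then 1 else 0))
      = (Finset.univ.filter (fun w => G.Adj w v ∧ c w < k)).card
        + (Finset.univ.filter (fun w => G.Adj w u ∧ c w < k)).card := by
    rw [Finset.sum_add_distrib, Finset.card_filter, Finset.card_filter]
  have hv := card_deficient_neighbors_le G H hGH k v
  have hu := card_deficient_neighbors_le G H hGH k u
  rw [← hc] at hv hu
  omega
end

section
/- In the bipartite graph construction from an instance of 1-in-3 satisfiability with 6m triples (each variable in exactly 3 triples), each added edge between two variable-vertices can decrease the total residual anonymity of the triple-vertices by at most 6; hence at least m edges are needed to raise all 6m triple-vertices from (6,1)- to (7,1)-anonymity. -/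
open scoped Classical in
/-- The number of vertices at distance exactly 2 from `v` (sharing a neighbor with `v`). -/
noncomputable def twoNbhdCount {V : Type*} [Fintype V] (G : SimpleGraph V) (v : V) : ℕ :=
  (Finset.univ.filter
    (fun w => w ≠ v ∧ (G.neighborSet v ∩ G.neighborSet w).Nonempty)).card

open scoped Classical

private lemma adj_sup_left {V : Type*} (G : SimpleGraph V) (x y u z : V)
    (hux : u ≠ x) (huy : u ≠ y) :
    (G ⊔ SimpleGraph.fromEdgeSet {s(x, y)}).Adj u z ↔ G.Adj u z := by
  simp only [SimpleGraph.sup_adj, SimpleGraph.fromEdgeSet_adj, Set.mem_singleton_iff,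
    Sym2.eq_iff]
  constructor
  · rintro (h | ⟨(⟨rfl, rfl⟩ | ⟨rfl, rfl⟩), _⟩)
    · exact h
    · exact absurd rfl hux
    · exact absurd rfl huy
  · exact Or.inl

private lemma step_le {V : Type*} [Fintype V] (G : SimpleGraph V) (x y u : V)
    (hux : u ≠ x) (huy : u ≠ y) :
    twoNbhdCount (G ⊔ SimpleGraph.fromEdgeSet {s(x, y)}) u ≤
      twoNbhdCount G u + ((if G.Adj u y then 1 else 0) + (if G.Adj u x then 1 else 0)) := by
  classical
  set H := G ⊔ SimpleGraph.fromEdgeSet {s(x, y)} with hH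
  have hsub : (Finset.univ.filter
      (fun w => w ≠ u ∧ (H.neighborSet u ∩ H.neighborSet w).Nonempty)) ⊆
      (Finset.univ.filter
        (fun w => w ≠ u ∧ (G.neighborSet u ∩ G.neighborSet w).Nonempty)) ∪
      ((if G.Adj u y then ({x} : Finset V) else ∅) ∪ (if G.Adj u x then {y} else ∅)) := by
    intro w hw
    simp only [Finset.mem_filter, Finset.mem_univ, true_and] at hw
    obtain ⟨hwu, z, hz⟩ := hw
    simp only [Set.mem_inter_iff, SimpleGraph.mem_neighborSet] at hz
    have huz : G.Adj u z := (adj_sup_left G x y u z hux huy).1 hz.1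
    have hwz := hz.2
    rw [hH] at hwz
    simp only [SimpleGraph.sup_adj, SimpleGraph.fromEdgeSet_adj, Set.mem_singleton_iff,
      Sym2.eq_iff] at hwz
    rcases hwz with h | ⟨(⟨rfl, rfl⟩ | ⟨rfl, rfl⟩), _⟩
    · apply Finset.mem_union_left
      simp only [Finset.mem_filter, Finset.mem_univ, true_and]
      exact ⟨hwu, z, by simp [SimpleGraph.mem_neighborSet, huz, h]⟩
    · apply Finset.mem_union_right
      apply Finset.mem_union_left
      simp [huz]
    · apply Finset.mem_union_right
      apply Finset.mem_union_right
      simp [huz]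
  have h1 : twoNbhdCount H u ≤
      twoNbhdCount G u +
        (((if G.Adj u y then ({x} : Finset V) else ∅)).card +
          ((if G.Adj u x then ({y} : Finset V) else ∅)).card) := by
    refine le_trans (Finset.card_le_card hsub) ?_
    refine le_trans (Finset.card_union_le _ _) ?_
    exact Nat.add_le_add_left (Finset.card_union_le _ _) _
  refine le_trans h1 ?_
  gcongr <;> split <;> simp

/-- In the bipartite reduction from 1-in-3 SAT, `U` is the set of `6m` triple-vertices,
each initially having exactly 6 vertices at distance 2 (i.e., `(6,1)`- but not
`(7,1)`-anonymous).  Each added edge joins two variable-vertices having at most 3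
neighbors in `U`, so it can decrease the total residual anonymity of the
triple-vertices by at most 6.  Hence if after `T` edge additions every triple-vertex
has at least 7 vertices at distance 2, then `T ≥ m`. -/
theorem reduction_edge_lower_bound {V : Type*} [Fintype V] (m T : ℕ) (U : Finset V)
    (hU : U.card = 6 * m) (G : ℕ → SimpleGraph V)
    (hstep : ∀ i < T, ∃ x y : V, x ∉ U ∧ y ∉ U ∧ x ≠ y ∧
      ((G i).neighborSet x ∩ (U : Set V)).ncard ≤ 3 ∧
      ((G i).neighborSet y ∩ (U : Set V)).ncard ≤ 3 ∧
      G (i + 1) = G i ⊔ SimpleGraph.fromEdgeSet {s(x, y)})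
    (hinit : ∀ u ∈ U, twoNbhdCount (G 0) u = 6)
    (hfinal : ∀ u ∈ U, 7 ≤ twoNbhdCount (G T) u) :
    m ≤ T := by
  classical
  set S : ℕ → ℕ := fun i => ∑ u ∈ U, twoNbhdCount (G i) u with hS
  have hstepS : ∀ i < T, S (i + 1) ≤ S i + 6 := by
    intro i hi
    obtain ⟨x, y, hx, hy, hxy, hncx, hncy, hGi⟩ := hstep i hi
    have key : ∀ u ∈ U, twoNbhdCount (G (i+1)) u ≤
        twoNbhdCount (G i) u +
          ((if (G i).Adj u y then 1 else 0) + (if (G i).Adj u x then 1 else 0)) := by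
      intro u hu
      rw [hGi]
      exact step_le (G i) x y u (fun h => hx (h ▸ hu)) (fun h => hy (h ▸ hu))
    have hsum : S (i+1) ≤ S i +
        ((∑ u ∈ U, if (G i).Adj u y then 1 else 0) +
         (∑ u ∈ U, if (G i).Adj u x then 1 else 0)) := by
      rw [hS]
      simp only [← Finset.sum_add_distrib]
      exact Finset.sum_le_sum key
    have hcard : ∀ w : V, ((G i).neighborSet w ∩ (U : Set V)).ncard ≤ 3 →
        (∑ u ∈ U, if (G i).Adj u w then 1 else 0) ≤ 3 := by
      intro w hw
      have : ((G i).neighborSet w ∩ (U : Set V)) =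
          ↑(U.filter (fun u => (G i).Adj u w)) := by
        ext v
        simp [SimpleGraph.mem_neighborSet, SimpleGraph.adj_comm, and_comm]
      rw [this, Set.ncard_coe_finset] at hw
      calc (∑ u ∈ U, if (G i).Adj u w then 1 else 0)
          = (U.filter (fun u => (G i).Adj u w)).card := by
            rw [Finset.card_filter]
        _ ≤ 3 := hw
    have := hcard y hncy
    have := hcard x hncx
    omega
  have hmono : ∀ n ≤ T, S n ≤ S 0 + 6 * n := by
    intro n hn
    induction n with
    | zero => simp
    | succ k ih =>
      have hk := ih (Nat.le_of_succ_le hn)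
      have := hstepS k (Nat.lt_of_succ_le hn)
      omega
  have h0 : S 0 = 36 * m := by
    rw [hS]
    calc ∑ u ∈ U, twoNbhdCount (G 0) u = ∑ u ∈ U, 6 := Finset.sum_congr rfl hinit
      _ = 36 * m := by rw [Finset.sum_const, hU]; ring
  have hT : 42 * m ≤ S T := by
    calc 42 * m = ∑ u ∈ U, 7 := by rw [Finset.sum_const, hU]; ring
      _ ≤ S T := Finset.sum_le_sum hfinal
  have := hmono T le_rfl
  omega
end

section
/- In the graph consisting of a k-clique together with two extra vertices x and y joined only by the edge xy, connecting both x and y to a single clique vertex u yields a (k−1, 1)-anonymous graph. -/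
/-- The graph on a `k`-clique `Fin k` together with two extra vertices `x = Sum.inr 0`
and `y = Sum.inr 1`, with edges `xy`, `xu`, `yu` where `u = Sum.inl 0` is a fixed
clique vertex, and no other edges incident to `x, y`. -/
def cliqueWithPendantPair (k : ℕ) : SimpleGraph (Fin k ⊕ Fin 2) where
  Adj a b :=
    match a, b with
    | Sum.inl i, Sum.inl j => i ≠ j
    | Sum.inl i, Sum.inr _ => i.val = 0
    | Sum.inr _, Sum.inl j => j.val = 0
    | Sum.inr a, Sum.inr b => a ≠ b
  symm := ⟨by rintro (i | a) (j | b) h <;> simp_all <;> exact fun e => h e.symm⟩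
  loopless := ⟨by rintro (i | a) h <;> simp_all⟩

/-- Connecting both extra vertices `x` and `y` to a single clique vertex `u` yields a
`(k-1, 1)`-anonymous graph (for `k ≥ 3`). -/
theorem clique_with_pair_anonymous (k : ℕ) (hk : 3 ≤ k) :
    ∀ v : Fin k ⊕ Fin 2, ∃ U : Finset (Fin k ⊕ Fin 2), v ∉ U ∧ k - 1 ≤ U.card ∧
      ∀ w ∈ U, ((cliqueWithPendantPair k).neighborSet v ∩
        (cliqueWithPendantPair k).neighborSet w).Nonempty := by
  rintro (i | a)
  · -- v is a clique vertex i; take all other clique vertices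
    refine ⟨(Finset.univ.erase i).image Sum.inl, ?_, ?_, ?_⟩
    · simp
    · rw [Finset.card_image_of_injective _ Sum.inl_injective,
        Finset.card_erase_of_mem (Finset.mem_univ i), Finset.card_univ, Fintype.card_fin]
    · intro w hw
      simp only [Finset.mem_image, Finset.mem_erase] at hw
      obtain ⟨j, ⟨hji, -⟩, rfl⟩ := hw
      -- find a third clique vertex l ≠ i, j
      have hne : (Finset.univ \ {i, j} : Finset (Fin k)).Nonempty := by
        rw [Finset.sdiff_nonempty]
        intro hsub
        have h1 : ({i, j} : Finset (Fin k)).card ≤ 2 :=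
          (Finset.card_insert_le _ _).trans (by simp)
        have h2 := Finset.card_le_card hsub
        simp only [Finset.card_univ, Fintype.card_fin] at h2
        omega
      obtain ⟨l, hl⟩ := hne
      simp only [Finset.mem_sdiff, Finset.mem_insert, Finset.mem_singleton] at hl
      push_neg at hl
      refine ⟨Sum.inl l, ?_, ?_⟩ <;>
        simp only [SimpleGraph.mem_neighborSet, cliqueWithPendantPair]
      · exact fun h => hl.2.1 h.symm
      · exact fun h => hl.2.2 h.symm
  · -- v is x or y; take all clique vertices
    refine ⟨Finset.univ.image Sum.inl, by simp, ?_, ?_⟩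
    · rw [Finset.card_image_of_injective _ Sum.inl_injective, Finset.card_univ,
        Fintype.card_fin]
      omega
    · intro w hw
      simp only [Finset.mem_image, Finset.mem_univ, true_and] at hw
      obtain ⟨j, rfl⟩ := hw
      by_cases hj : j.val = 0
      · -- common neighbor: the other inr vertex
        refine ⟨Sum.inr (a + 1), ?_, ?_⟩ <;>
          simp only [SimpleGraph.mem_neighborSet, cliqueWithPendantPair]
        · exact (by simp : a ≠ a + 1)
        · exact hj
      · -- common neighbor: u = inl 0
        refine ⟨Sum.inl ⟨0, by omega⟩, ?_, ?_⟩ <;>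
          simp only [SimpleGraph.mem_neighborSet, cliqueWithPendantPair] <;>
          first
          | rfl
          | exact fun h => hj (congrArg Fin.val h)
end
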